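/- arXiv:2410.18928 — 4 statements merged into one kernel-verified Lean document; each statement's English description precedes it below -/
import Mathlib

section
/- Let $f(\xi) = \min\{\|\mathbf{A}\mathbf{z}-\mathbf{y}\|_2 : \|\mathbf{z}\|_1 \le \xi\}$ and let $\xi_0 = \min\{\|\mathbf{z}\|_1 : \mathbf{A}^\dagger\mathbf{A}\mathbf{z} = \mathbf{A}^\dagger\mathbf{y}\}$. Then for $0 \le \xi \le \xi_0$: every minimizer $\mathbf{z}(\xi)$ satisfies $\|\mathbf{z}(\xi)\|_1 = \xi$, and $f$ is strictly decreasing on $[0,\xi_0]$; and for $\xi \ge \xi_0$, $f(\xi) = \sqrt{\mathbf{y}^\dagger\mathbf{y} - \mathbf{y}^\dagger\mathbf{A}\mathbf{A}^+\mathbf{y}}$, where $\mathbf{A}^+$ is the Moore–Penrose pseudoinverse. -/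
open Matrix

noncomputable def l1norm {D : ℕ} (z : Fin D → ℂ) : ℝ := ∑ j, ‖z j‖

noncomputable def l2norm {Γ : ℕ} (v : Fin Γ → ℂ) : ℝ :=
  Real.sqrt (∑ i, ‖v i‖ ^ 2)

/-- `resMin A y ξ = min { ‖Az - y‖₂ : ‖z‖₁ ≤ ξ }`. -/
noncomputable def resMin {Γ D : ℕ} (A : Matrix (Fin Γ) (Fin D) ℂ) (y : Fin Γ → ℂ)
    (ξ : ℝ) : ℝ :=
  sInf {r : ℝ | ∃ z : Fin D → ℂ, l1norm z ≤ ξ ∧ l2norm (A.mulVec z - y) = r}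

open Classical in
/-- The Moore–Penrose pseudoinverse, characterized by the four Penrose equations. -/
noncomputable def pinv {Γ D : ℕ} (A : Matrix (Fin Γ) (Fin D) ℂ) :
    Matrix (Fin D) (Fin Γ) ℂ :=
  if h : ∃ B : Matrix (Fin D) (Fin Γ) ℂ,
      A * B * A = A ∧ B * A * B = B ∧ (A * B)ᴴ = A * B ∧ (B * A)ᴴ = B * A
  then h.choose else 0

/-- `ξ₀ = min { ‖z‖₁ : AᴴA z = Aᴴ y }`. -/
noncomputable def xiZero {Γ D : ℕ} (A : Matrix (Fin Γ) (Fin D) ℂ) (y : Fin Γ → ℂ) : ℝ :=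
  sInf {r : ℝ | ∃ z : Fin D → ℂ, (Aᴴ * A).mulVec z = Aᴴ.mulVec y ∧ l1norm z = r}

/-! ### Auxiliary lemmas -/

section Aux

variable {Γ D : ℕ}

lemma l1norm_nonneg (z : Fin D → ℂ) : 0 ≤ l1norm z :=
  Finset.sum_nonneg fun _ _ => norm_nonneg _

lemma l2norm_nonneg (v : Fin Γ → ℂ) : 0 ≤ l2norm v := Real.sqrt_nonneg _

lemma l1norm_add_le (u v : Fin D → ℂ) : l1norm (u + v) ≤ l1norm u + l1norm v := by
  rw [l1norm, l1norm, l1norm, ← Finset.sum_add_distrib]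
  exact Finset.sum_le_sum fun i _ => norm_add_le (u i) (v i)

lemma l1norm_smul (c : ℂ) (v : Fin D → ℂ) :
    l1norm (c • v) = ‖c‖ * l1norm v := by
  simp [l1norm, Finset.mul_sum, _root_.map_mul]

lemma l2norm_eq_norm (v : Fin Γ → ℂ) :
    l2norm v = ‖(WithLp.equiv 2 (Fin Γ → ℂ)).symm v‖ := by
  rw [EuclideanSpace.norm_eq]
  simp [l2norm, WithLp.equiv_symm_apply]

lemma inner_eq_dot (u v : Fin Γ → ℂ) :
    (inner ℂ ((WithLp.equiv 2 (Fin Γ → ℂ)).symm u) ((WithLp.equiv 2 (Fin Γ → ℂ)).symm v) : ℂ)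
      = star u ⬝ᵥ v := by
  simp [PiLp.inner_apply, RCLike.inner_apply, dotProduct, WithLp.equiv_symm_apply, mul_comm]

lemma star_dot_self_zero {n : ℕ} {v : Fin n → ℂ} (h : star v ⬝ᵥ v = 0) : v = 0 := by
  have h2 : ∑ i, Complex.normSq (v i) = 0 := by
    have : star v ⬝ᵥ v = ((∑ i, Complex.normSq (v i) : ℝ) : ℂ) := by
      simp [dotProduct, Complex.normSq_eq_conj_mul_self]
    rw [this] at h
    exact_mod_cast h
  funext i
  have := (Finset.sum_eq_zero_iff_of_nonneg (fun j _ => Complex.normSq_nonneg (v j))).mp h2 i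
    (Finset.mem_univ i)
  simpa using Complex.normSq_eq_zero.mp this

lemma star_dot_self_re (v : Fin Γ → ℂ) :
    (star v ⬝ᵥ v).re = ∑ i, ‖v i‖ ^ 2 := by
  have : star v ⬝ᵥ v = ((∑ i, ‖v i‖ ^ 2 : ℝ) : ℂ) := by
    simp [dotProduct, Complex.sq_norm, Complex.normSq_eq_conj_mul_self]
  rw [this, Complex.ofReal_re]

lemma ker_AHA_sub (A : Matrix (Fin Γ) (Fin D) ℂ) (x : Fin D → ℂ)
    (h : (Aᴴ * A) *ᵥ x = 0) : A *ᵥ x = 0 := by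
  apply star_dot_self_zero
  rw [star_mulVec, ← dotProduct_mulVec, mulVec_mulVec, h, dotProduct_zero]

lemma penrose_exists (A : Matrix (Fin Γ) (Fin D) ℂ) :
    ∃ B : Matrix (Fin D) (Fin Γ) ℂ,
      A * B * A = A ∧ B * A * B = B ∧ (A * B)ᴴ = A * B ∧ (B * A)ᴴ = B * A := by
  classical
  set H : Matrix (Fin D) (Fin D) ℂ := Aᴴ * A with hHdef
  have hH : H.IsHermitian := isHermitian_conjTranspose_mul_self A
  set U : Matrix (Fin D) (Fin D) ℂ := (hH.eigenvectorUnitary : Matrix (Fin D) (Fin D) ℂ) with hUdef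
  have hU1 : star U * U = 1 := Unitary.coe_star_mul_self _
  set d : Fin D → ℝ := hH.eigenvalues with hddef
  set dc : Fin D → ℂ := fun i => (d i : ℂ) with hdcdef
  have hHeq : H = U * diagonal dc * star U := hH.spectral_theorem
  set p : Fin D → ℂ := fun i => if d i = 0 then 0 else ((d i : ℂ))⁻¹ with hpdef
  set Hp : Matrix (Fin D) (Fin D) ℂ := U * diagonal p * star U with hHpdef
  have mulform : ∀ f g : Fin D → ℂ,
      (U * diagonal f * star U) * (U * diagonal g * star U)
        = U * diagonal (f * g) * star U := by
    intro f g
    calc (U * diagonal f * star U) * (U * diagonal g * star U)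
        = U * (diagonal f * ((star U * U) * (diagonal g * star U))) := by
          simp only [Matrix.mul_assoc]
      _ = U * (diagonal f * (diagonal g * star U)) := by rw [hU1, Matrix.one_mul]
      _ = U * ((diagonal f * diagonal g) * star U) := by rw [Matrix.mul_assoc]
      _ = U * (diagonal (f * g) * star U) := by rw [diagonal_mul_diagonal]; rfl
      _ = U * diagonal (f * g) * star U := by rw [Matrix.mul_assoc]
  have e1 : dc * p * dc = dc := by
    funext i
    by_cases h : d i = 0
    · simp [hpdef, hdcdef, h]
    · simp only [Pi.mul_apply, hpdef, hdcdef, if_neg h]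
      field_simp
  have e2 : p * dc * p = p := by
    funext i
    by_cases h : d i = 0
    · simp [hpdef, hdcdef, h]
    · simp only [Pi.mul_apply, hpdef, hdcdef, if_neg h]
      field_simp
  have hQ : Hp * H = H * Hp := by
    rw [hHpdef, hHeq, mulform, mulform, mul_comm]
  have hHpH_H : H * Hp * H = H := by
    rw [hHpdef, hHeq, mulform, mulform, e1]
  have hHpHHp : Hp * H * Hp = Hp := by
    rw [hHpdef, hHeq, mulform, mulform, e2]
  have hps : star p = p := by
    funext i
    by_cases h : d i = 0
    · simp [hpdef, h]
    · simp [hpdef, h, ← Complex.ofReal_inv, Complex.conj_ofReal]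
  have hHpHerm : Hpᴴ = Hp := by
    rw [hHpdef, conjTranspose_mul, conjTranspose_mul, star_eq_conjTranspose,
      conjTranspose_conjTranspose, diagonal_conjTranspose, hps, ← Matrix.mul_assoc]
  have hAQ : A * (Hp * H) = A := by
    have key : ∀ x : Fin D → ℂ, (A * (Hp * H)) *ᵥ x = A *ᵥ x := by
      intro x
      have hker : H *ᵥ ((Hp * H) *ᵥ x - x) = 0 := by
        rw [mulVec_sub, mulVec_mulVec, ← Matrix.mul_assoc, hHpH_H, sub_self]
      have h0 : A *ᵥ ((Hp * H) *ᵥ x - x) = 0 := ker_AHA_sub A _ (by rw [← hHdef]; exact hker)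
      rw [mulVec_sub] at h0
      have := sub_eq_zero.mp h0
      rw [← mulVec_mulVec]
      exact this
    ext i j
    have := congr_fun (key (Pi.single j 1)) i
    simpa [mulVec_single] using this
  refine ⟨Hp * Aᴴ, ?_, ?_, ?_, ?_⟩
  · have h1 : A * (Hp * Aᴴ) * A = A * (Hp * H) := by
      rw [hHdef]; simp only [Matrix.mul_assoc]
    rw [h1, hAQ]
  · have h1 : (Hp * Aᴴ) * A * (Hp * Aᴴ) = (Hp * H * Hp) * Aᴴ := by
      rw [hHdef]; simp only [Matrix.mul_assoc]
    rw [h1, hHpHHp]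
  · rw [conjTranspose_mul, conjTranspose_mul, conjTranspose_conjTranspose, hHpHerm]
    simp only [Matrix.mul_assoc]
  · have hBA : (Hp * Aᴴ) * A = Hp * H := by rw [Matrix.mul_assoc, ← hHdef]
    rw [hBA, conjTranspose_mul, hHpHerm, hH.eq, ← hQ]

lemma pinv_spec (A : Matrix (Fin Γ) (Fin D) ℂ) :
    A * pinv A * A = A ∧ pinv A * A * pinv A = pinv A ∧
      (A * pinv A)ᴴ = A * pinv A ∧ (pinv A * A)ᴴ = pinv A * A := by
  unfold pinv
  rw [dif_pos (penrose_exists A)]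
  exact (penrose_exists A).choose_spec

lemma AHAB (A : Matrix (Fin Γ) (Fin D) ℂ) : Aᴴ * A * pinv A = Aᴴ := by
  obtain ⟨h1, _, h3, _⟩ := pinv_spec A
  have e : Aᴴ * ((pinv A)ᴴ * Aᴴ) = Aᴴ := by
    have := congrArg conjTranspose h1
    rwa [conjTranspose_mul, conjTranspose_mul] at this
  rw [Matrix.mul_assoc, ← h3, conjTranspose_mul]
  exact e

lemma l1norm_continuous : Continuous (l1norm (D := D)) := by
  unfold l1norm
  exact continuous_finset_sum _ fun j _ => continuous_norm.comp (continuous_apply j)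

lemma mulVec_continuous' {m n : ℕ} (M : Matrix (Fin m) (Fin n) ℂ) :
    Continuous (fun z : Fin n → ℂ => M *ᵥ z) := by
  apply continuous_pi
  intro i
  unfold Matrix.mulVec dotProduct
  exact continuous_finset_sum _ fun j _ => continuous_const.mul (continuous_apply j)

lemma resfun_continuous (A : Matrix (Fin Γ) (Fin D) ℂ) (y : Fin Γ → ℂ) :
    Continuous (fun z : Fin D → ℂ => l2norm (A.mulVec z - y)) := by
  unfold l2norm
  apply Real.continuous_sqrt.comp
  apply continuous_finset_sum _ fun i _ => ?_
  apply Continuous.pow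
  apply continuous_norm.comp
  exact ((continuous_apply i).comp (mulVec_continuous' A)).sub continuous_const

lemma isCompact_l1ball (c : ℝ) : IsCompact {z : Fin D → ℂ | l1norm z ≤ c} := by
  rw [Metric.isCompact_iff_isClosed_bounded]
  constructor
  · exact isClosed_le l1norm_continuous continuous_const
  · apply Bornology.IsBounded.subset (Metric.isBounded_closedBall (x := (0 : Fin D → ℂ)) (r := |c|))
    intro z hz
    simp only [Metric.mem_closedBall, dist_zero_right]
    rw [pi_norm_le_iff_of_nonneg (abs_nonneg c)]
    intro i
    calc ‖z i‖ = ‖z i‖ := rfl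
      _ ≤ l1norm z := Finset.single_le_sum (f := fun j => ‖z j‖)
          (fun j _ => norm_nonneg _) (Finset.mem_univ i)
      _ ≤ c := hz
      _ ≤ |c| := le_abs_self c

/-- minimality over all vectors implies the normal equations -/
lemma normal_of_min (A : Matrix (Fin Γ) (Fin D) ℂ) (y : Fin Γ → ℂ) (z : Fin D → ℂ)
    (hmin : ∀ w : Fin D → ℂ, l2norm (A.mulVec z - y) ≤ l2norm (A.mulVec w - y)) :
    (Aᴴ * A).mulVec z = Aᴴ.mulVec y := by
  have hdot : ∀ d : Fin D → ℂ, star (A.mulVec z - y) ⬝ᵥ (A.mulVec d) = 0 := by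
    intro d
    set U := (WithLp.equiv 2 (Fin Γ → ℂ)).symm (A.mulVec z - y) with hU
    set V := (WithLp.equiv 2 (Fin Γ → ℂ)).symm (A.mulVec d) with hV
    have key : ∀ c : ℂ, ‖U‖ ≤ ‖U + c • V‖ := by
      intro c
      have h1 := hmin (z + c • d)
      rw [l2norm_eq_norm, l2norm_eq_norm] at h1
      have h2 : A.mulVec (z + c • d) - y = (A.mulVec z - y) + c • (A.mulVec d) := by
        rw [mulVec_add, mulVec_smul, add_sub_right_comm]
      rw [h2] at h1
      exact h1
    set a : ℂ := inner ℂ U V with ha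
    set t : ℝ := 1 / (‖V‖ ^ 2 + 1) with ht
    have hVnn : (0:ℝ) ≤ ‖V‖ ^ 2 := sq_nonneg _
    have htpos : 0 < t := by positivity
    set c : ℂ := -(t : ℂ) * (starRingEnd ℂ) a with hc
    have h2 : ‖U‖ ^ 2 ≤ ‖U + c • V‖ ^ 2 :=
      pow_le_pow_left₀ (norm_nonneg _) (key c) 2
    rw [norm_add_sq (𝕜 := ℂ)] at h2
    have hinner : (inner ℂ U (c • V) : ℂ) = -(t:ℂ) * (Complex.normSq a : ℂ) := by
      rw [inner_smul_right, ← ha, hc]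
      rw [mul_assoc]
      congr 1
      rw [← Complex.normSq_eq_conj_mul_self]
    have hre : Complex.re (inner ℂ U (c • V)) = -t * Complex.normSq a := by
      rw [hinner]
      simp
    have hnormc : ‖c • V‖ ^ 2 = t ^ 2 * Complex.normSq a * ‖V‖ ^ 2 := by
      rw [norm_smul, mul_pow, hc]
      have : ‖-(t:ℂ) * (starRingEnd ℂ) a‖ ^ 2 = t ^ 2 * Complex.normSq a := by
        rw [norm_mul]
        simp [Complex.sq_norm, Complex.normSq_conj, mul_pow,
          Complex.norm_real, sq_abs]
      rw [this]
    have hfinal : Complex.normSq a = 0 := by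
      have hlt : t * ‖V‖ ^ 2 < 1 := by
        rw [ht, div_mul_eq_mul_div, one_mul, div_lt_one (by positivity)]
        linarith
      by_contra hne
      have hnpos : 0 < Complex.normSq a := (Complex.normSq_nonneg a).lt_of_ne (Ne.symm hne)
      have h3 : (0:ℝ) ≤ -2 * (t * Complex.normSq a) + t ^ 2 * Complex.normSq a * ‖V‖ ^ 2 := by
        have := h2
        rw [hnormc] at this
        have hre' : RCLike.re (inner ℂ U (c • V) : ℂ) = -t * Complex.normSq a := hre
        rw [hre'] at this
        linarith
      nlinarith [mul_pos (mul_pos htpos hnpos) (sub_pos.mpr hlt)]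
    have haz : a = 0 := Complex.normSq_eq_zero.mp hfinal
    rw [← inner_eq_dot]
    exact haz
  have hvm : star (A.mulVec z - y) ᵥ* A = 0 := by
    funext j
    have := hdot (Pi.single j 1)
    rw [dotProduct_mulVec] at this
    simpa [dotProduct_single] using this
  have h0 : Aᴴ.mulVec (A.mulVec z - y) = 0 := by
    have hs : star (Aᴴ.mulVec (A.mulVec z - y)) = star (A.mulVec z - y) ᵥ* Aᴴᴴ :=
      star_mulVec _ _
    rw [conjTranspose_conjTranspose, hvm] at hs
    exact star_eq_zero.mp hs
  rw [mulVec_sub, mulVec_mulVec] at h0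
  exact sub_eq_zero.mp h0

/-- normal equations imply global minimality -/
lemma globalmin_of_normal (A : Matrix (Fin Γ) (Fin D) ℂ) (y : Fin Γ → ℂ) (z : Fin D → ℂ)
    (h : (Aᴴ * A).mulVec z = Aᴴ.mulVec y) :
    ∀ w : Fin D → ℂ, l2norm (A.mulVec z - y) ≤ l2norm (A.mulVec w - y) := by
  intro w
  have h0 : Aᴴ.mulVec (A.mulVec z - y) = 0 := by
    rw [mulVec_sub, mulVec_mulVec, h, sub_self]
  set U := (WithLp.equiv 2 (Fin Γ → ℂ)).symm (A.mulVec z - y) with hU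
  set V := (WithLp.equiv 2 (Fin Γ → ℂ)).symm (A.mulVec (w - z)) with hV
  have hsplit : A.mulVec w - y = (A.mulVec z - y) + A.mulVec (w - z) := by
    rw [mulVec_sub]; abel
  have hVU : (inner ℂ V U : ℂ) = 0 := by
    rw [inner_eq_dot, star_mulVec, ← dotProduct_mulVec, h0, dotProduct_zero]
  have hUV : (inner ℂ U V : ℂ) = 0 := by
    rw [← inner_conj_symm, hVU, map_zero]
  rw [l2norm_eq_norm, l2norm_eq_norm, hsplit]
  have hq : (WithLp.equiv 2 (Fin Γ → ℂ)).symm ((A.mulVec z - y) + A.mulVec (w - z)) = U + V := rfl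
  rw [hq]
  have h2 : ‖U‖ ^ 2 ≤ ‖U + V‖ ^ 2 := by
    rw [norm_add_sq (𝕜 := ℂ), hUV]
    simp [sq_nonneg]
  calc ‖U‖ = Real.sqrt (‖U‖ ^ 2) := (Real.sqrt_sq (norm_nonneg _)).symm
    _ ≤ Real.sqrt (‖U + V‖ ^ 2) := Real.sqrt_le_sqrt h2
    _ = ‖U + V‖ := Real.sqrt_sq (norm_nonneg _)

lemma resMin_eq_of_min (A : Matrix (Fin Γ) (Fin D) ℂ) (y : Fin Γ → ℂ) (ξ : ℝ)
    (z : Fin D → ℂ) (hz : l1norm z ≤ ξ)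
    (hmin : ∀ w : Fin D → ℂ, l1norm w ≤ ξ → l2norm (A.mulVec z - y) ≤ l2norm (A.mulVec w - y)) :
    resMin A y ξ = l2norm (A.mulVec z - y) := by
  apply le_antisymm
  · exact csInf_le ⟨0, fun r ⟨w, _, hw⟩ => hw ▸ l2norm_nonneg _⟩ ⟨z, hz, rfl⟩
  · exact le_csInf ⟨_, z, hz, rfl⟩ fun r ⟨w, hw, hr⟩ => hr ▸ hmin w hw

lemma resMin_attained (A : Matrix (Fin Γ) (Fin D) ℂ) (y : Fin Γ → ℂ) (ξ : ℝ) (hξ : 0 ≤ ξ) :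
    ∃ z : Fin D → ℂ, l1norm z ≤ ξ ∧
      (∀ w : Fin D → ℂ, l1norm w ≤ ξ → l2norm (A.mulVec z - y) ≤ l2norm (A.mulVec w - y)) := by
  have hK : IsCompact {z : Fin D → ℂ | l1norm z ≤ ξ} := isCompact_l1ball ξ
  have hne : ({z : Fin D → ℂ | l1norm z ≤ ξ}).Nonempty := ⟨0, by simpa [l1norm] using hξ⟩
  obtain ⟨z, hzK, hzmin⟩ := hK.exists_isMinOn hne ((resfun_continuous A y).continuousOn)
  exact ⟨z, hzK, fun w hw => hzmin hw⟩

lemma xiZero_attained (A : Matrix (Fin Γ) (Fin D) ℂ) (y : Fin Γ → ℂ) :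
    ∃ z₀ : Fin D → ℂ, (Aᴴ * A).mulVec z₀ = Aᴴ.mulVec y ∧ l1norm z₀ = xiZero A y := by
  have hsol : (Aᴴ * A).mulVec ((pinv A).mulVec y) = Aᴴ.mulVec y := by
    rw [mulVec_mulVec, AHAB]
  set c : ℝ := l1norm ((pinv A).mulVec y) with hc
  set S : Set (Fin D → ℂ) := {z | (Aᴴ * A).mulVec z = Aᴴ.mulVec y} with hS
  have hSclosed : IsClosed S :=
    isClosed_eq (mulVec_continuous' (Aᴴ * A)) continuous_const
  set K : Set (Fin D → ℂ) := {z | l1norm z ≤ c} ∩ S with hK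
  have hKcomp : IsCompact K := (isCompact_l1ball c).inter_right hSclosed
  have hKne : K.Nonempty := ⟨(pinv A).mulVec y, hc.ge, hsol⟩
  obtain ⟨z₀, hz₀K, hz₀min⟩ := hKcomp.exists_isMinOn hKne l1norm_continuous.continuousOn
  refine ⟨z₀, hz₀K.2, ?_⟩
  apply le_antisymm
  · refine le_csInf ⟨c, ⟨(pinv A).mulVec y, hsol, hc.symm⟩⟩ ?_
    rintro r ⟨w, hw, rfl⟩
    by_cases hcase : l1norm w ≤ c
    · exact hz₀min ⟨hcase, hw⟩
    · calc l1norm z₀ ≤ c := hz₀K.1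
        _ ≤ l1norm w := (not_le.mp hcase).le
  · exact csInf_le ⟨0, fun r ⟨w, _, hr⟩ => hr ▸ l1norm_nonneg w⟩ ⟨z₀, hz₀K.2, rfl⟩

lemma xiZero_nonneg (A : Matrix (Fin Γ) (Fin D) ℂ) (y : Fin Γ → ℂ) : 0 ≤ xiZero A y :=
  Real.sInf_nonneg fun r hrS => by obtain ⟨z, _, hr⟩ := hrS; exact hr ▸ l1norm_nonneg z

/-- the value of the unconstrained minimum -/
lemma value_formula (A : Matrix (Fin Γ) (Fin D) ℂ) (y : Fin Γ → ℂ) (z₀ : Fin D → ℂ)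
    (hz : (Aᴴ * A).mulVec z₀ = Aᴴ.mulVec y) :
    l2norm (A.mulVec z₀ - y) =
      Real.sqrt ((star y ⬝ᵥ y - star y ⬝ᵥ A.mulVec ((pinv A).mulVec y)).re) := by
  obtain ⟨h1, _, h3, _⟩ := pinv_spec A
  set P : Matrix (Fin Γ) (Fin Γ) ℂ := A * pinv A with hP
  have hPH : Pᴴ = P := h3
  have hPP : P * P = P := by
    rw [hP]
    calc A * pinv A * (A * pinv A) = A * pinv A * A * pinv A := by
          simp only [Matrix.mul_assoc]
      _ = A * pinv A := by rw [h1]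
  have hAz : A.mulVec z₀ = P.mulVec y := by
    have hker : Aᴴ.mulVec (A.mulVec z₀ - P.mulVec y) = 0 := by
      rw [mulVec_sub, mulVec_mulVec, mulVec_mulVec, hz, hP, ← Matrix.mul_assoc, AHAB, sub_self]
    have heq : A.mulVec z₀ - P.mulVec y = A.mulVec (z₀ - (pinv A).mulVec y) := by
      rw [mulVec_sub, hP, ← mulVec_mulVec]
    have hu0 : A.mulVec z₀ - P.mulVec y = 0 := by
      apply star_dot_self_zero
      nth_rewrite 1 [heq]
      rw [star_mulVec, ← dotProduct_mulVec, hker, dotProduct_zero]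
    exact sub_eq_zero.mp hu0
  have hdot2 : star (P.mulVec y - y) ⬝ᵥ (P.mulVec y - y)
      = star y ⬝ᵥ y - star y ⬝ᵥ (P.mulVec y) := by
    have hs : star (P.mulVec y) ⬝ᵥ (P.mulVec y) = star y ⬝ᵥ (P.mulVec y) := by
      rw [star_mulVec, hPH, ← dotProduct_mulVec, mulVec_mulVec, hPP]
    have hs2 : star (P.mulVec y) ⬝ᵥ y = star y ⬝ᵥ (P.mulVec y) := by
      rw [star_mulVec, hPH, ← dotProduct_mulVec]
    rw [star_sub, sub_dotProduct, dotProduct_sub, dotProduct_sub, hs, hs2]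
    ring
  rw [l2norm, hAz]
  congr 1
  rw [← star_dot_self_re, hdot2, mulVec_mulVec]

end Aux

/-- Properties of `f(ξ) = min {‖Az-y‖₂ : ‖z‖₁ ≤ ξ}`:
(i) for `ξ₀ ≤ ξ`, `f(ξ) = √(y†y − y†AA⁺y)`;
(ii) for `0 ≤ ξ ≤ ξ₀`, every minimizer `z(ξ)` satisfies `‖z(ξ)‖₁ = ξ`;
(iii) `f` is strictly decreasing on `[0, ξ₀]`. -/
theorem stmt9 {Γ D : ℕ} (A : Matrix (Fin Γ) (Fin D) ℂ) (y : Fin Γ → ℂ) :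
    (∀ ξ : ℝ, xiZero A y ≤ ξ →
      resMin A y ξ =
        Real.sqrt ((star y ⬝ᵥ y - star y ⬝ᵥ A.mulVec ((pinv A).mulVec y)).re)) ∧
    (∀ ξ : ℝ, 0 ≤ ξ → ξ ≤ xiZero A y → ∀ z : Fin D → ℂ, l1norm z ≤ ξ →
      (∀ z' : Fin D → ℂ, l1norm z' ≤ ξ →
        l2norm (A.mulVec z - y) ≤ l2norm (A.mulVec z' - y)) →
      l1norm z = ξ) ∧
    StrictAntiOn (resMin A y) (Set.Icc 0 (xiZero A y)) := by
  -- part (ii) as a key step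
  have part2 : ∀ ξ : ℝ, 0 ≤ ξ → ξ ≤ xiZero A y → ∀ z : Fin D → ℂ, l1norm z ≤ ξ →
      (∀ z' : Fin D → ℂ, l1norm z' ≤ ξ →
        l2norm (A.mulVec z - y) ≤ l2norm (A.mulVec z' - y)) →
      l1norm z = ξ := by
    intro ξ hξ0 hξx z hz hmin
    by_contra hne
    have hlt : l1norm z < ξ := lt_of_le_of_ne hz hne
    have hglobal : ∀ w : Fin D → ℂ, l2norm (A.mulVec z - y) ≤ l2norm (A.mulVec w - y) := by
      intro w
      set L : ℝ := l1norm (w - z) with hL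
      have hLnn : 0 ≤ L := l1norm_nonneg _
      set δ : ℝ := ξ - l1norm z with hδ
      have hδpos : 0 < δ := by simp only [hδ]; linarith
      set t : ℝ := min 1 (δ / (L + 1)) with htdef
      have ht0 : 0 < t := lt_min one_pos (by positivity)
      have ht1 : t ≤ 1 := min_le_left _ _
      set zt : Fin D → ℂ := z + (t : ℂ) • (w - z) with hzt
      have hfeas : l1norm zt ≤ ξ := by
        have h1 : l1norm zt ≤ l1norm z + t * L := by
          calc l1norm zt ≤ l1norm z + l1norm ((t : ℂ) • (w - z)) := l1norm_add_le _ _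
            _ = l1norm z + t * L := by
                rw [l1norm_smul, Complex.norm_real, Real.norm_eq_abs, abs_of_nonneg ht0.le]
        have h2 : t * L ≤ δ := by
          calc t * L ≤ (δ / (L + 1)) * L :=
                mul_le_mul_of_nonneg_right (min_le_right _ _) hLnn
            _ ≤ δ := by
                rw [div_mul_eq_mul_div, div_le_iff₀ (by positivity)]
                nlinarith
        linarith
      have hstep := hmin zt hfeas
      have hdecomp : A.mulVec zt - y
          = ((1 - t : ℝ) : ℂ) • (A.mulVec z - y) + ((t : ℝ) : ℂ) • (A.mulVec w - y) := by
        rw [hzt, mulVec_add, mulVec_smul, mulVec_sub]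
        funext i
        simp only [Pi.add_apply, Pi.sub_apply, Pi.smul_apply, smul_eq_mul, Complex.ofReal_sub,
          Complex.ofReal_one]
        ring
      have hconv : l2norm (A.mulVec zt - y)
          ≤ (1 - t) * l2norm (A.mulVec z - y) + t * l2norm (A.mulVec w - y) := by
        rw [hdecomp, l2norm_eq_norm, l2norm_eq_norm, l2norm_eq_norm]
        have hq : (WithLp.equiv 2 (Fin Γ → ℂ)).symm
            (((1 - t : ℝ) : ℂ) • (A.mulVec z - y) + ((t : ℝ) : ℂ) • (A.mulVec w - y))
            = ((1 - t : ℝ) : ℂ) • (WithLp.equiv 2 (Fin Γ → ℂ)).symm (A.mulVec z - y)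
              + ((t : ℝ) : ℂ) • (WithLp.equiv 2 (Fin Γ → ℂ)).symm (A.mulVec w - y) := rfl
        rw [hq]
        calc ‖((1 - t : ℝ) : ℂ) • (WithLp.equiv 2 (Fin Γ → ℂ)).symm (A.mulVec z - y)
              + ((t : ℝ) : ℂ) • (WithLp.equiv 2 (Fin Γ → ℂ)).symm (A.mulVec w - y)‖
            ≤ ‖((1 - t : ℝ) : ℂ) • (WithLp.equiv 2 (Fin Γ → ℂ)).symm (A.mulVec z - y)‖
              + ‖((t : ℝ) : ℂ) • (WithLp.equiv 2 (Fin Γ → ℂ)).symm (A.mulVec w - y)‖ :=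
              norm_add_le _ _
          _ = (1 - t) * ‖(WithLp.equiv 2 (Fin Γ → ℂ)).symm (A.mulVec z - y)‖
              + t * ‖(WithLp.equiv 2 (Fin Γ → ℂ)).symm (A.mulVec w - y)‖ := by
              rw [norm_smul, norm_smul]
              simp only [Complex.norm_real, Real.norm_eq_abs]
              rw [abs_of_nonneg (by linarith), abs_of_nonneg ht0.le]
      have h3 : t * l2norm (A.mulVec z - y) ≤ t * l2norm (A.mulVec w - y) := by
        have := hstep.trans hconv
        nlinarith
      exact le_of_mul_le_mul_left h3 ht0
    have hnormal := normal_of_min A y z hglobal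
    have : xiZero A y ≤ l1norm z :=
      csInf_le ⟨0, fun r ⟨w, _, hr⟩ => hr ▸ l1norm_nonneg w⟩ ⟨z, hnormal, rfl⟩
    linarith
  refine ⟨?_, part2, ?_⟩
  · -- part (i)
    intro ξ hξ
    obtain ⟨z₀, hz₀sol, hz₀l1⟩ := xiZero_attained A y
    have hfeas : l1norm z₀ ≤ ξ := by rw [hz₀l1]; exact hξ
    have hmin := globalmin_of_normal A y z₀ hz₀sol
    rw [resMin_eq_of_min A y ξ z₀ hfeas (fun w _ => hmin w), value_formula A y z₀ hz₀sol]
  · -- part (iii)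
    intro a ha b hb hab
    obtain ⟨za, hza, hzamin⟩ := resMin_attained A y a ha.1
    obtain ⟨zb, hzb, hzbmin⟩ := resMin_attained A y b hb.1
    have hra : resMin A y a = l2norm (A.mulVec za - y) := resMin_eq_of_min A y a za hza hzamin
    have hrb : resMin A y b = l2norm (A.mulVec zb - y) := resMin_eq_of_min A y b zb hzb hzbmin
    have hle : resMin A y b ≤ resMin A y a := by
      rw [hra, hrb]
      exact hzbmin za (hza.trans hab.le)
    refine lt_of_le_of_ne hle fun heq => ?_
    have hminb : ∀ w : Fin D → ℂ, l1norm w ≤ b →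
        l2norm (A.mulVec za - y) ≤ l2norm (A.mulVec w - y) := by
      intro w hw
      calc l2norm (A.mulVec za - y) = resMin A y b := by rw [heq, hra]
        _ = l2norm (A.mulVec zb - y) := hrb
        _ ≤ l2norm (A.mulVec w - y) := hzbmin w hw
    have hbz := part2 b hb.1 hb.2 za (hza.trans hab.le) hminb
    have : l1norm za ≤ a := hza
    linarith
end

section
/- Let $H, H'$ be $n$-qubit Hamiltonians, $\rho_0$ a density matrix, $\rho(t) = e^{-iHt}\rho_0 e^{iHt}$ and $\rho'(t) = e^{-iH't}\rho_0 e^{iH't}$, and $O$ an observable. Then $|\mathrm{Tr}[O\rho(t)] - \mathrm{Tr}[O\rho'(t)]| \le 2t\,\|O\|_\infty\,\|\boldsymbol{\mu} - \boldsymbol{\mu}'\|_1$, where $\boldsymbol{\mu}, \boldsymbol{\mu}'$ are the Pauli coefficient vectors of $H, H'$ (with identity coefficient zero). -/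
open Matrix Complex
open scoped Matrix.Norms.L2Operator ComplexOrder

noncomputable def pauliMat : Fin 4 → Matrix (Fin 2) (Fin 2) ℂ
  | 0 => 1
  | 1 => !![0, 1; 1, 0]
  | 2 => !![0, -Complex.I; Complex.I, 0]
  | 3 => !![1, 0; 0, -1]

noncomputable def pauliString {n : ℕ} (s : Fin n → Fin 4) :
    Matrix (Fin n → Fin 2) (Fin n → Fin 2) ℂ :=
  fun x y => ∏ i, pauliMat (s i) (x i) (y i)

section Helpers
open NormedSpace

lemma pauliMat_conjTranspose (k : Fin 4) : (pauliMat k)ᴴ = pauliMat k := by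
  fin_cases k <;> ext i j <;> fin_cases i <;> fin_cases j <;>
    simp [pauliMat, conjTranspose_apply, Matrix.one_apply]

lemma pauliMat_mul_self (k : Fin 4) : pauliMat k * pauliMat k = 1 := by
  fin_cases k <;> ext i j <;> fin_cases i <;> fin_cases j <;>
    simp [pauliMat, Matrix.mul_apply, Fin.sum_univ_two, Matrix.one_apply, Complex.I_mul_I]

lemma pauliString_conjTranspose {n : ℕ} (s : Fin n → Fin 4) :
    (pauliString s)ᴴ = pauliString s := by
  ext x y
  simp only [conjTranspose_apply, pauliString]
  rw [show (star (∏ i, pauliMat (s i) (y i) (x i)) : ℂ)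
      = ∏ i, star (pauliMat (s i) (y i) (x i)) from by
    simpa using map_prod (starRingEnd ℂ) _ Finset.univ]
  refine Finset.prod_congr rfl fun i _ => ?_
  conv_rhs => rw [← pauliMat_conjTranspose (s i)]
  rfl

lemma pauliString_mul_self {n : ℕ} (s : Fin n → Fin 4) :
    pauliString s * pauliString s = 1 := by
  ext x y
  simp only [Matrix.mul_apply, pauliString]
  calc (∑ z : Fin n → Fin 2, (∏ i, pauliMat (s i) (x i) (z i)) * ∏ i, pauliMat (s i) (z i) (y i))
      = ∑ z : Fin n → Fin 2, ∏ i, (pauliMat (s i) (x i) (z i) * pauliMat (s i) (z i) (y i)) := by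
        simp [Finset.prod_mul_distrib]
    _ = ∏ i, ∑ c : Fin 2, pauliMat (s i) (x i) c * pauliMat (s i) c (y i) := by
        rw [Finset.prod_univ_sum, Fintype.piFinset_univ]
    _ = ∏ i, (pauliMat (s i) * pauliMat (s i)) (x i) (y i) := by
        simp [Matrix.mul_apply]
    _ = ∏ i, (1 : Matrix (Fin 2) (Fin 2) ℂ) (x i) (y i) := by
        simp [pauliMat_mul_self]
    _ = (1 : Matrix (Fin n → Fin 2) (Fin n → Fin 2) ℂ) x y := by
        simp only [Matrix.one_apply]
        rw [Finset.prod_boole]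
        simp [funext_iff]

lemma pauliString_mem_unitary {n : ℕ} (s : Fin n → Fin 4) :
    pauliString s ∈ unitary (Matrix (Fin n → Fin 2) (Fin n → Fin 2) ℂ) := by
  have h : star (pauliString s) = pauliString s := pauliString_conjTranspose s
  exact ⟨by rw [h, pauliString_mul_self], by rw [h, pauliString_mul_self]⟩

variable {q : Type*} [Fintype q] [DecidableEq q]

lemma exp_skew_unitary (B : Matrix q q ℂ) (hB : Bᴴ = -B) :
    NormedSpace.exp B ∈ unitary (Matrix q q ℂ) := by
  have hstar : star (NormedSpace.exp B) = NormedSpace.exp (-B) := by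
    rw [show (star (NormedSpace.exp B) : Matrix q q ℂ) = (NormedSpace.exp B)ᴴ from rfl,
      ← Matrix.exp_conjTranspose, hB]
  constructor
  · rw [hstar, ← Matrix.exp_add_of_commute (-B) B (Commute.neg_left rfl), neg_add_cancel, NormedSpace.exp_zero]
  · rw [hstar, ← Matrix.exp_add_of_commute B (-B) (Commute.neg_right rfl), add_neg_cancel, NormedSpace.exp_zero]

variable [Nonempty q]

lemma norm_of_unitary {U : Matrix q q ℂ} (hU : U ∈ unitary (Matrix q q ℂ)) :
    ‖U‖ = 1 := by
  have : Nontrivial (Matrix q q ℂ) := by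
    refine nontrivial_of_ne 1 0 fun h => ?_
    have := congr_fun (congr_fun h (Classical.arbitrary q)) (Classical.arbitrary q)
    simp at this
  exact CStarRing.norm_of_mem_unitary hU

lemma norm_mul_unitary (A : Matrix q q ℂ) {U : Matrix q q ℂ}
    (hU : U ∈ unitary (Matrix q q ℂ)) : ‖A * U‖ = ‖A‖ := by
  refine le_antisymm ?_ ?_
  · calc ‖A * U‖ ≤ ‖A‖ * ‖U‖ := norm_mul_le _ _
      _ = ‖A‖ := by rw [norm_of_unitary hU, mul_one]
  · calc ‖A‖ = ‖A * U * star U‖ := by rw [mul_assoc, hU.2, mul_one]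
      _ ≤ ‖A * U‖ * ‖star U‖ := norm_mul_le _ _
      _ = ‖A * U‖ := by rw [show (star U : Matrix q q ℂ) = Uᴴ from rfl,
          Matrix.l2_opNorm_conjTranspose, norm_of_unitary hU, mul_one]

lemma norm_unitary_mul (A : Matrix q q ℂ) {U : Matrix q q ℂ}
    (hU : U ∈ unitary (Matrix q q ℂ)) : ‖U * A‖ = ‖A‖ :=
  CStarRing.norm_coe_unitary_mul ⟨U, hU⟩ A

lemma skew_smul (A : Matrix q q ℂ) (hA : Aᴴ = -A) (s : ℝ) : (s • A)ᴴ = -(s • A) := by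
  rw [Matrix.conjTranspose_smul, star_trivial, hA, smul_neg]

lemma exp_sub_exp_norm_le (A A' : Matrix q q ℂ) (hA : Aᴴ = -A) (hA' : A'ᴴ = -A')
    (t : ℝ) (ht : 0 ≤ t) :
    ‖NormedSpace.exp (t • A) - NormedSpace.exp (t • A')‖ ≤ t * ‖A - A'‖ := by
  set f : ℝ → Matrix q q ℂ := fun s => NormedSpace.exp (s • A) * NormedSpace.exp (s • (-A')) with hf
  set g : ℝ → Matrix q q ℂ := fun s => NormedSpace.exp (s • A) * (A - A') * NormedSpace.exp (s • (-A')) with hg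
  have hderiv : ∀ s : ℝ, HasDerivAt f (g s) s := by
    intro s
    have h1 : HasDerivAt (fun u : ℝ => NormedSpace.exp (u • A)) (NormedSpace.exp (s • A) * A) s := by
      have h := hasDerivAt_exp_smul_const (𝕂 := ℝ) A s
      exact h
    have h2 : HasDerivAt (fun u : ℝ => NormedSpace.exp (u • (-A'))) ((-A') * NormedSpace.exp (s • (-A'))) s := by
      have h := hasDerivAt_exp_smul_const' (𝕂 := ℝ) (-A') s
      exact h
    have h3 := h1.mul h2
    refine h3.congr_deriv ?_
    show _ = NormedSpace.exp (s • A) * (A - A') * NormedSpace.exp (s • (-A'))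
    noncomm_ring
  have hUnit : ∀ s : ℝ, NormedSpace.exp (s • A) ∈ unitary (Matrix q q ℂ) := fun s =>
    exp_skew_unitary _ (skew_smul A hA s)
  have hUnit' : ∀ s : ℝ, NormedSpace.exp (s • (-A')) ∈ unitary (Matrix q q ℂ) := fun s =>
    exp_skew_unitary _ (skew_smul (-A') (by rw [Matrix.conjTranspose_neg, hA', neg_neg]) s)
  have hUnit'' : ∀ s : ℝ, NormedSpace.exp (s • A') ∈ unitary (Matrix q q ℂ) := fun s =>
    exp_skew_unitary _ (skew_smul A' hA' s)
  have hbound : ∀ s ∈ (Set.univ : Set ℝ), ‖g s‖ ≤ ‖A - A'‖ := by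
    intro s _
    have : ‖g s‖ = ‖A - A'‖ := by
      simp only [hg]
      rw [mul_assoc, norm_unitary_mul _ (hUnit s), norm_mul_unitary _ (hUnit' s)]
    exact this.le
  have key : ‖f t - f 0‖ ≤ ‖A - A'‖ * ‖t - (0:ℝ)‖ :=
    convex_univ.norm_image_sub_le_of_norm_hasDerivWithin_le
      (fun s _ => (hderiv s).hasDerivWithinAt) hbound trivial trivial
  have hinv : NormedSpace.exp (t • (-A')) * NormedSpace.exp (t • A') = 1 := by
    have hc : Commute (t • (-A')) (t • A') := (((Commute.refl A').neg_left).smul_left t).smul_right t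
    rw [← Matrix.exp_add_of_commute _ _ hc, ← smul_add, neg_add_cancel, smul_zero, NormedSpace.exp_zero]
  have hfactor : NormedSpace.exp (t • A) - NormedSpace.exp (t • A') = (f t - f 0) * NormedSpace.exp (t • A') := by
    simp only [hf]
    rw [sub_mul, mul_assoc, hinv, mul_one, zero_smul, zero_smul, NormedSpace.exp_zero]
    rw [one_mul, one_mul]
  rw [hfactor, norm_mul_unitary _ (hUnit'' t)]
  calc ‖f t - f 0‖ ≤ ‖A - A'‖ * ‖t - (0:ℝ)‖ := key
    _ = t * ‖A - A'‖ := by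
        rw [sub_zero, Real.norm_eq_abs, _root_.abs_of_nonneg ht]
        ring

lemma norm_entry_le_l2 (A : Matrix q q ℂ) (i j : q) : ‖A i j‖ ≤ ‖A‖ := by
  have h := A.l2_opNorm_mulVec (EuclideanSpace.single j 1)
  rw [EuclideanSpace.norm_single, norm_one, mul_one] at h
  refine le_trans ?_ h
  set v := (EuclideanSpace.equiv q ℂ).symm (A *ᵥ (EuclideanSpace.single j 1)) with hv
  have hvi : v i = A i j := by
    have : v i = ∑ k, A i k * (EuclideanSpace.single j (1:ℂ)) k := rfl
    rw [this]
    simp [EuclideanSpace.single_apply]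
  have := EuclideanSpace.norm_eq v
  rw [this]
  rw [← hvi]
  have h1 : ‖v i‖ ^ 2 ≤ ∑ k, ‖v k‖ ^ 2 :=
    Finset.single_le_sum (f := fun k => ‖v k‖ ^ 2) (fun k _ => by positivity) (Finset.mem_univ i)
  calc ‖v i‖ = Real.sqrt (‖v i‖ ^ 2) := by rw [Real.sqrt_sq (norm_nonneg _)]
    _ ≤ Real.sqrt (∑ k, ‖v k‖ ^ 2) := Real.sqrt_le_sqrt h1

lemma abs_trace_mul_le (M ρ : Matrix q q ℂ) (hρ : ρ.PosSemidef) (hρtr : ρ.trace = 1) :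
    ‖(M * ρ).trace‖ ≤ ‖M‖ := by
  have hher := hρ.1
  set V : Matrix q q ℂ := (hher.eigenvectorUnitary : Matrix q q ℂ) with hV
  have hVu : V ∈ unitary (Matrix q q ℂ) := hher.eigenvectorUnitary.2
  set d : q → ℝ := hher.eigenvalues with hd
  have key : ∀ N : Matrix q q ℂ, (N * ρ).trace = ∑ i, (star V * N * V) i i * (d i : ℂ) := by
    intro N
    conv_lhs => rw [hher.spectral_theorem]
    rw [Unitary.conjStarAlgAut_apply, ← hV, ← hd]
    rw [show N * (V * diagonal (RCLike.ofReal ∘ d) * star V)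
        = N * V * diagonal (RCLike.ofReal ∘ d) * star V by noncomm_ring,
      Matrix.trace_mul_cycle,
      show star V * (N * V) = star V * N * V by noncomm_ring]
    simp [Matrix.trace, Matrix.diag, Matrix.mul_diagonal]
  have hsum : ∑ i, d i = 1 := by
    have h1 := key 1
    rw [one_mul, hρtr] at h1
    have : ((∑ i, d i : ℝ) : ℂ) = 1 := by
      push_cast
      rw [h1]
      refine Finset.sum_congr rfl fun i _ => ?_
      rw [mul_one, hVu.1, Matrix.one_apply_eq, one_mul]
    exact_mod_cast this
  have hdnn : ∀ i, 0 ≤ d i := fun i => hρ.eigenvalues_nonneg i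
  rw [key M]
  calc ‖∑ i, (star V * M * V) i i * (d i : ℂ)‖
      ≤ ∑ i, ‖(star V * M * V) i i * (d i : ℂ)‖ := by
        exact norm_sum_le _ _
    _ ≤ ∑ i, ‖M‖ * d i := by
        refine Finset.sum_le_sum fun i _ => ?_
        rw [norm_mul]
        have h2 : ‖((d i : ℂ))‖ = d i := by
          rw [Complex.norm_real, Real.norm_eq_abs, _root_.abs_of_nonneg (hdnn i)]
        rw [h2]
        refine mul_le_mul_of_nonneg_right ?_ (hdnn i)
        have h3 : ‖star V * M * V‖ = ‖M‖ := by
          rw [norm_mul_unitary _ hVu, norm_unitary_mul _ (Unitary.star_mem hVu)]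
        calc ‖(star V * M * V) i i‖ = ‖(star V * M * V) i i‖ := rfl
          _ ≤ ‖star V * M * V‖ := norm_entry_le_l2 _ i i
          _ = ‖M‖ := h3
    _ = ‖M‖ := by rw [← Finset.mul_sum, hsum, mul_one]

end Helpers

/-- For Hamiltonians `H = ∑ μ_P P`, `H' = ∑ μ'_P P` (identity coefficient zero), a density
matrix `ρ₀`, an observable `O` and `t ≥ 0`:
`|Tr[O ρ(t)] − Tr[O ρ'(t)]| ≤ 2t ‖O‖∞ ‖μ − μ'‖₁`, where `ρ(t) = e^{-iHt} ρ₀ e^{iHt}`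
and `ρ'(t) = e^{-iH't} ρ₀ e^{iH't}`. -/
theorem stmt14 {n : ℕ} (μ μ' : (Fin n → Fin 4) → ℝ)
    (hμI : μ (fun _ => 0) = 0) (hμ'I : μ' (fun _ => 0) = 0)
    (ρ₀ : Matrix (Fin n → Fin 2) (Fin n → Fin 2) ℂ)
    (hρ : ρ₀.PosSemidef) (hρtr : ρ₀.trace = 1)
    (O : Matrix (Fin n → Fin 2) (Fin n → Fin 2) ℂ) (hO : O.IsHermitian)
    (t : ℝ) (ht : 0 ≤ t) :
    ‖((O * (NormedSpace.exp ((-Complex.I * (t : ℂ)) •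
              ∑ p : Fin n → Fin 4, (μ p : ℂ) • pauliString p) * ρ₀ *
            NormedSpace.exp ((Complex.I * (t : ℂ)) •
              ∑ p : Fin n → Fin 4, (μ p : ℂ) • pauliString p))).trace -
         (O * (NormedSpace.exp ((-Complex.I * (t : ℂ)) •
              ∑ p : Fin n → Fin 4, (μ' p : ℂ) • pauliString p) * ρ₀ *
            NormedSpace.exp ((Complex.I * (t : ℂ)) •
              ∑ p : Fin n → Fin 4, (μ' p : ℂ) • pauliString p))).trace)‖ ≤
      2 * t * ‖O‖ * ∑ p : Fin n → Fin 4, |μ p - μ' p| := by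
  classical
  set H : Matrix (Fin n → Fin 2) (Fin n → Fin 2) ℂ := ∑ p : Fin n → Fin 4, (μ p : ℂ) • pauliString p with hH
  set H' : Matrix (Fin n → Fin 2) (Fin n → Fin 2) ℂ := ∑ p : Fin n → Fin 4, (μ' p : ℂ) • pauliString p with hH'
  have hHherm : Hᴴ = H := by
    rw [hH, Matrix.conjTranspose_sum]
    refine Finset.sum_congr rfl fun p _ => ?_
    rw [Matrix.conjTranspose_smul, pauliString_conjTranspose]
    congr 1
    exact Complex.conj_ofReal _
  have hH'herm : H'ᴴ = H' := by
    rw [hH', Matrix.conjTranspose_sum]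
    refine Finset.sum_congr rfl fun p _ => ?_
    rw [Matrix.conjTranspose_smul, pauliString_conjTranspose]
    congr 1
    exact Complex.conj_ofReal _
  -- rewrite complex smul as real smul of scaled generator
  have hsm : ∀ (c : ℂ) (B : Matrix (Fin n → Fin 2) (Fin n → Fin 2) ℂ), ((c * (t:ℂ)) • B) = t • (c • B) := by
    intro c B
    rw [← smul_assoc]
    congr 1
    rw [Complex.real_smul, mul_comm]
  set A : Matrix (Fin n → Fin 2) (Fin n → Fin 2) ℂ := (-Complex.I) • H with hA
  set A' : Matrix (Fin n → Fin 2) (Fin n → Fin 2) ℂ := (-Complex.I) • H' with hA'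
  set B : Matrix (Fin n → Fin 2) (Fin n → Fin 2) ℂ := Complex.I • H with hB
  set B' : Matrix (Fin n → Fin 2) (Fin n → Fin 2) ℂ := Complex.I • H' with hB'
  have hAskew : Aᴴ = -A := by
    rw [hA, Matrix.conjTranspose_smul, hHherm]
    simp
  have hA'skew : A'ᴴ = -A' := by
    rw [hA', Matrix.conjTranspose_smul, hH'herm]
    simp
  have hBskew : Bᴴ = -B := by
    rw [hB, Matrix.conjTranspose_smul, hHherm]
    simp
  have hB'skew : B'ᴴ = -B' := by
    rw [hB', Matrix.conjTranspose_smul, hH'herm]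
    simp
  set U : Matrix (Fin n → Fin 2) (Fin n → Fin 2) ℂ := NormedSpace.exp (t • A) with hU
  set U' : Matrix (Fin n → Fin 2) (Fin n → Fin 2) ℂ := NormedSpace.exp (t • A') with hU'
  set W : Matrix (Fin n → Fin 2) (Fin n → Fin 2) ℂ := NormedSpace.exp (t • B) with hW
  set W' : Matrix (Fin n → Fin 2) (Fin n → Fin 2) ℂ := NormedSpace.exp (t • B') with hW'
  have hreH : NormedSpace.exp ((-Complex.I * (t:ℂ)) • H) = U := by rw [hU, hsm]
  have hreH' : NormedSpace.exp ((-Complex.I * (t:ℂ)) • H') = U' := by rw [hU', hsm]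
  have hreW : NormedSpace.exp ((Complex.I * (t:ℂ)) • H) = W := by rw [hW, hsm]
  have hreW' : NormedSpace.exp ((Complex.I * (t:ℂ)) • H') = W' := by rw [hW', hsm]
  rw [hreH, hreH', hreW, hreW']
  -- unitarity
  have hUu : U ∈ unitary (Matrix (Fin n → Fin 2) (Fin n → Fin 2) ℂ) := exp_skew_unitary _ (skew_smul A hAskew t)
  have hU'u : U' ∈ unitary (Matrix (Fin n → Fin 2) (Fin n → Fin 2) ℂ) := exp_skew_unitary _ (skew_smul A' hA'skew t)
  have hWu : W ∈ unitary (Matrix (Fin n → Fin 2) (Fin n → Fin 2) ℂ) := exp_skew_unitary _ (skew_smul B hBskew t)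
  have hW'u : W' ∈ unitary (Matrix (Fin n → Fin 2) (Fin n → Fin 2) ℂ) := exp_skew_unitary _ (skew_smul B' hB'skew t)
  -- norm of Hamiltonian difference
  have hHdiff : ‖H - H'‖ ≤ ∑ p : Fin n → Fin 4, |μ p - μ' p| := by
    have : H - H' = ∑ p : Fin n → Fin 4, ((μ p - μ' p : ℝ) : ℂ) • pauliString p := by
      rw [hH, hH', ← Finset.sum_sub_distrib]
      refine Finset.sum_congr rfl fun p _ => ?_
      rw [← sub_smul, ← Complex.ofReal_sub]
    rw [this]
    refine le_trans (norm_sum_le _ _) ?_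
    refine Finset.sum_le_sum fun p _ => ?_
    rw [norm_smul, norm_of_unitary (pauliString_mem_unitary p), mul_one,
      Complex.norm_real, Real.norm_eq_abs]
  have hAdiff : ‖A - A'‖ = ‖H - H'‖ := by
    rw [hA, hA', ← smul_sub, norm_smul]
    simp
  have hBdiff : ‖B - B'‖ = ‖H - H'‖ := by
    rw [hB, hB', ← smul_sub, norm_smul]
    simp
  have hUbound : ‖U - U'‖ ≤ t * ‖H - H'‖ := by
    rw [← hAdiff]
    exact exp_sub_exp_norm_le A A' hAskew hA'skew t ht
  have hWbound : ‖W - W'‖ ≤ t * ‖H - H'‖ := by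
    rw [← hBdiff]
    exact exp_sub_exp_norm_le B B' hBskew hB'skew t ht
  -- trace decomposition
  have tr_cyc : ∀ (X Y : Matrix (Fin n → Fin 2) (Fin n → Fin 2) ℂ), (O * (X * ρ₀ * Y)).trace = (Y * O * X * ρ₀).trace := by
    intro X Y
    rw [show O * (X * ρ₀ * Y) = (O * X * ρ₀) * Y by noncomm_ring, Matrix.trace_mul_comm,
      show Y * (O * X * ρ₀) = (Y * O * X) * ρ₀ by noncomm_ring]
  have hdiff : (O * (U * ρ₀ * W)).trace - (O * (U' * ρ₀ * W')).trace
      = (((W - W') * (O * U)) * ρ₀).trace + ((W' * (O * (U - U'))) * ρ₀).trace := by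
    rw [tr_cyc U W, tr_cyc U' W', ← Matrix.trace_sub, ← Matrix.trace_add]
    congr 1
    noncomm_ring
  rw [hdiff]
  have hT1 : ‖(((W - W') * (O * U)) * ρ₀).trace‖ ≤ (t * ‖H - H'‖) * ‖O‖ := by
    refine le_trans (abs_trace_mul_le _ _ hρ hρtr) ?_
    calc ‖(W - W') * (O * U)‖ ≤ ‖W - W'‖ * ‖O * U‖ := norm_mul_le _ _
      _ = ‖W - W'‖ * ‖O‖ := by rw [norm_mul_unitary _ hUu]
      _ ≤ (t * ‖H - H'‖) * ‖O‖ :=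
          mul_le_mul_of_nonneg_right hWbound (norm_nonneg _)
  have hT2 : ‖((W' * (O * (U - U'))) * ρ₀).trace‖ ≤ ‖O‖ * (t * ‖H - H'‖) := by
    refine le_trans (abs_trace_mul_le _ _ hρ hρtr) ?_
    calc ‖W' * (O * (U - U'))‖ = ‖O * (U - U')‖ := norm_unitary_mul _ hW'u
      _ ≤ ‖O‖ * ‖U - U'‖ := norm_mul_le _ _
      _ ≤ ‖O‖ * (t * ‖H - H'‖) := mul_le_mul_of_nonneg_left hUbound (norm_nonneg _)
  calc ‖(((W - W') * (O * U)) * ρ₀).trace + ((W' * (O * (U - U'))) * ρ₀).trace‖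
      ≤ ‖(((W - W') * (O * U)) * ρ₀).trace‖
        + ‖((W' * (O * (U - U'))) * ρ₀).trace‖ := norm_add_le _ _
    _ ≤ (t * ‖H - H'‖) * ‖O‖ + ‖O‖ * (t * ‖H - H'‖) := add_le_add hT1 hT2
    _ ≤ 2 * t * ‖O‖ * ∑ p : Fin n → Fin 4, |μ p - μ' p| := by
        nlinarith [hHdiff, norm_nonneg (H - H'), norm_nonneg O, ht,
          mul_nonneg ht (norm_nonneg O)]
end

section
/- Let $H, H'$ be Hermitian matrices on $\mathbb{C}^{2^n}$, and let $\Omega = \ketbra{\Omega}{\Omega}$ be the maximally entangled state on $\mathbb{C}^{2^n}\otimes\mathbb{C}^{2^n}$. Then the normalized Choi states of the evolution channels satisfy $\frac{1}{\sqrt{2}}\|(e^{-iHt}\otimes I)\Omega(e^{iHt}\otimes I) - (e^{-iH't}\otimes I)\Omega(e^{iH't}\otimes I)\|_2 \le \frac{t}{\sqrt{2^n}}\|H - H'\|_2$, where $\|\cdot\|_2$ is the Frobenius norm. -/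
open Matrix Complex
open scoped Matrix.Norms.L2Operator Kronecker

/-- The Frobenius norm of a complex matrix. -/
noncomputable def frob {m m' : Type*} [Fintype m] [Fintype m'] (A : Matrix m m' ℂ) : ℝ :=
  Real.sqrt (∑ i, ∑ j, ‖A i j‖ ^ 2)

/-- The maximally entangled state vector `|Ω⟩ = 2^{-n/2} ∑_j |j⟩⊗|j⟩` on `ℂ^{2ⁿ} ⊗ ℂ^{2ⁿ}`. -/
noncomputable def maxEntVec (n : ℕ) : (Fin n → Fin 2) × (Fin n → Fin 2) → ℂ :=
  fun jk => if jk.1 = jk.2 then ((Real.sqrt (2 ^ n) : ℝ) : ℂ)⁻¹ else 0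

namespace Stmt16Aux

open scoped ComplexConjugate

set_option linter.unusedSectionVars false

variable {ι κ : Type*} [Fintype ι] [Fintype κ]

/-- Square of the frobenius norm. -/
noncomputable def frobSq (A : Matrix ι κ ℂ) : ℝ := ∑ i, ∑ j, ‖A i j‖ ^ 2

lemma frobSq_def (A : Matrix ι κ ℂ) : frobSq A = ∑ i, ∑ j, ‖A i j‖ ^ 2 := rfl

lemma frob_def (A : Matrix ι κ ℂ) : frob A = Real.sqrt (frobSq A) := rfl

lemma frobSq_nonneg (A : Matrix ι κ ℂ) : 0 ≤ frobSq A := by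
  refine Finset.sum_nonneg fun i _ => Finset.sum_nonneg fun j _ => by positivity

lemma frobSq_eq_re_trace (A : Matrix ι κ ℂ) : frobSq A = (Matrix.trace (Aᴴ * A)).re := by
  simp only [frobSq, Matrix.trace, Matrix.diag, Matrix.mul_apply,
    Matrix.conjTranspose_apply, Complex.re_sum]
  rw [Finset.sum_comm]
  refine Finset.sum_congr rfl fun j _ => Finset.sum_congr rfl fun i _ => ?_
  rw [RCLike.star_def, mul_comm, Complex.mul_conj, Complex.ofReal_re, Complex.sq_norm]

lemma frobSq_unitary_left [DecidableEq ι] {U M : Matrix ι ι ℂ} (hU : Uᴴ * U = 1) :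
    frobSq (U * M) = frobSq M := by
  rw [frobSq_eq_re_trace, frobSq_eq_re_trace, Matrix.conjTranspose_mul,
    show Mᴴ * Uᴴ * (U * M) = Mᴴ * (Uᴴ * U) * M by noncomm_ring, hU]
  simp

lemma frobSq_unitary_right [DecidableEq ι] {M U : Matrix ι ι ℂ} (hU : U * Uᴴ = 1) :
    frobSq (M * U) = frobSq M := by
  rw [frobSq_eq_re_trace, frobSq_eq_re_trace, Matrix.conjTranspose_mul,
    show Uᴴ * Mᴴ * (M * U) = Uᴴ * (Mᴴ * M) * U by noncomm_ring,
    Matrix.trace_mul_cycle, ← Matrix.mul_assoc, hU]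
  simp

lemma frobSq_of_unitary [DecidableEq ι] {U : Matrix ι ι ℂ} (hU : Uᴴ * U = 1) :
    frobSq U = Fintype.card ι := by
  have := frobSq_eq_re_trace U
  rw [this, hU]
  simp

lemma sum_abs_sq_eq_re (f : ι → ℂ) :
    ∑ i, ‖f i‖ ^ 2 = (∑ i, f i * conj (f i)).re := by
  rw [Complex.re_sum]
  refine Finset.sum_congr rfl fun i _ => ?_
  rw [Complex.mul_conj, Complex.ofReal_re, Complex.sq_norm]

lemma sum_one_complex {u : ι → ℂ} (hu : ∑ i, ‖u i‖ ^ 2 = 1) :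
    ∑ i, u i * conj (u i) = 1 := by
  have : ∀ i : ι, u i * conj (u i) = ((‖u i‖ ^ 2 : ℝ) : ℂ) := fun i => by
    rw [Complex.mul_conj, Complex.sq_norm]
  simp_rw [this, ← Complex.ofReal_sum, hu, Complex.ofReal_one]

lemma rankOne_diff_le (u v : ι → ℂ) (hu : ∑ i, ‖u i‖ ^ 2 = 1)
    (hv : ∑ i, ‖v i‖ ^ 2 = 1) :
    frob (vecMulVec u (star u) - vecMulVec v (star v)) ≤
      Real.sqrt 2 * Real.sqrt (∑ i, ‖u i - v i‖ ^ 2) := by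
  set c : ℂ := ∑ i, conj (u i) * v i with hc
  have hu' := sum_one_complex hu
  have hv' := sum_one_complex hv
  have h1 : ∑ i, u i * conj (v i) = conj c := by
    rw [hc, map_sum]
    exact Finset.sum_congr rfl fun i _ => by simp [mul_comm]
  have h2 : ∑ i, v i * conj (u i) = c := by
    exact Finset.sum_congr rfl fun i _ => mul_comm _ _
  have key : (∑ i, ∑ j,
      ‖(vecMulVec u (star u) - vecMulVec v (star v)) i j‖ ^ 2)
      = 2 - 2 * Complex.normSq c := by
    have e1 : ∀ i j : ι, (vecMulVec u (star u) - vecMulVec v (star v)) i j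
        = u i * conj (u j) - v i * conj (v j) := by
      intro i j
      simp [Matrix.sub_apply, Matrix.vecMulVec_apply, Pi.star_apply, RCLike.star_def]
    have e2 : ∀ i : ι, ∑ j, ‖(vecMulVec u (star u) - vecMulVec v (star v)) i j‖ ^ 2
        = (∑ j, ((u i * conj (u j) - v i * conj (v j)) *
            conj (u i * conj (u j) - v i * conj (v j)))).re := by
      intro i
      rw [← sum_abs_sq_eq_re]
      exact Finset.sum_congr rfl fun j _ => by rw [e1]
    simp_rw [e2, ← Complex.re_sum]
    have main : (∑ i, ∑ j, ((u i * conj (u j) - v i * conj (v j)) *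
        conj (u i * conj (u j) - v i * conj (v j)))) = 2 - 2 * (c * conj c) := by
      have expand : ∀ i j : ι, (u i * conj (u j) - v i * conj (v j)) *
          conj (u i * conj (u j) - v i * conj (v j)) =
          (u i * conj (u i)) * (u j * conj (u j)) + (v i * conj (v i)) * (v j * conj (v j))
            - (u i * conj (v i)) * (conj (u j) * v j)
            - (v i * conj (u i)) * (conj (v j) * u j) := by
        intro i j
        simp only [_root_.map_sub, _root_.map_mul, Complex.conj_conj]
        ring
      simp_rw [expand, Finset.sum_sub_distrib, Finset.sum_add_distrib, ← Finset.mul_sum,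
        ← Finset.sum_mul]
      have h3 : ∑ i, conj (v i) * u i = conj c := by
        rw [← h1]
        exact Finset.sum_congr rfl fun i _ => mul_comm _ _
      rw [hu', hv', h1, h2, h3, ← hc]
      ring
    rw [main, Complex.mul_conj]
    simp
  have key2 : (∑ i, ‖u i - v i‖ ^ 2) = 2 - 2 * c.re := by
    rw [sum_abs_sq_eq_re]
    have expand2 : (∑ i, (u i - v i) * conj (u i - v i)) = 2 - (conj c + c) := by
      have expand : ∀ i : ι, (u i - v i) * conj (u i - v i) =
          u i * conj (u i) + v i * conj (v i) - (u i * conj (v i) + v i * conj (u i)) := by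
        intro i
        simp only [_root_.map_sub]
        ring
      simp_rw [expand, Finset.sum_sub_distrib, Finset.sum_add_distrib]
      rw [hu', hv', h1, h2]
      ring
    rw [expand2]
    simp [Complex.sub_re, Complex.add_re, Complex.conj_re]
    ring
  rw [show frob (vecMulVec u (star u) - vecMulVec v (star v)) =
    Real.sqrt (∑ i, ∑ j, ‖(vecMulVec u (star u) - vecMulVec v (star v)) i j‖ ^ 2)
    from rfl, key, key2]
  rw [← Real.sqrt_mul (by norm_num : (0:ℝ) ≤ 2)]
  apply Real.sqrt_le_sqrt
  have hns := Complex.normSq_apply c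
  nlinarith [sq_nonneg (c.re - 1), sq_nonneg c.im]

variable [DecidableEq ι]

lemma skew_smul {A : Matrix ι ι ℂ} (hA : A.IsHermitian) {c : ℂ} (hc : starRingEnd ℂ c = -c) :
    (c • A)ᴴ = -(c • A) := by
  rw [Matrix.conjTranspose_smul, hA.eq, RCLike.star_def, hc, neg_smul]

lemma exp_skew_left {S : Matrix ι ι ℂ} (hS : Sᴴ = -S) :
    (NormedSpace.exp S)ᴴ * NormedSpace.exp S = 1 := by
  rw [← Matrix.exp_conjTranspose, hS, ← Matrix.exp_add_of_commute _ _ (Commute.refl S).neg_left,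
    neg_add_cancel, NormedSpace.exp_zero]

lemma exp_skew_right {S : Matrix ι ι ℂ} (hS : Sᴴ = -S) :
    NormedSpace.exp S * (NormedSpace.exp S)ᴴ = 1 := by
  rw [← Matrix.exp_conjTranspose, hS, ← Matrix.exp_add_of_commute _ _ (Commute.refl S).neg_right,
    add_neg_cancel, NormedSpace.exp_zero]

lemma real_smul_matrix (s : ℝ) (M : Matrix ι ι ℂ) : s • M = ((s : ℂ)) • M := by
  ext i j
  simp [Complex.real_smul]

lemma star_neg_I_mul (t : ℝ) : starRingEnd ℂ (-Complex.I * (t : ℂ)) = -(-Complex.I * (t : ℂ)) := by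
  simp only [_root_.map_mul, _root_.map_neg, Complex.conj_I, Complex.conj_ofReal]
  ring

lemma exp_herm_unitary {A : Matrix ι ι ℂ} (hA : A.IsHermitian) (t : ℝ) :
    (NormedSpace.exp ((-Complex.I * (t : ℂ)) • A))ᴴ *
      NormedSpace.exp ((-Complex.I * (t : ℂ)) • A) = 1 :=
  exp_skew_left (skew_smul hA (star_neg_I_mul t))

open scoped Matrix.Norms.Frobenius in
lemma exp_diff_frob (A B : Matrix ι ι ℂ) (hA : A.IsHermitian) (hB : B.IsHermitian)
    {t : ℝ} (ht : 0 ≤ t) :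
    frob (NormedSpace.exp ((-Complex.I * (t : ℂ)) • A)
        - NormedSpace.exp ((-Complex.I * (t : ℂ)) • B)) ≤ t * frob (A - B) := by
  haveI : CompleteSpace (Matrix ι ι ℂ) := FiniteDimensional.complete ℝ _
  have hnorm : ∀ M : Matrix ι ι ℂ, ‖M‖ = frob M := by
    intro M
    rw [Matrix.frobenius_norm_def, frob, ← Real.sqrt_eq_rpow]
    congr 1
    refine Finset.sum_congr rfl fun i _ => Finset.sum_congr rfl fun j _ => ?_
    rw [Real.rpow_two]
  have hfrob_eq : ∀ M N : Matrix ι ι ℂ, frobSq M = frobSq N → frob M = frob N := by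
    intro M N h
    show Real.sqrt (frobSq M) = Real.sqrt (frobSq N)
    rw [h]
  have hinvL : ∀ U M : Matrix ι ι ℂ, Uᴴ * U = 1 → ‖U * M‖ = ‖M‖ := fun U M h => by
    rw [hnorm, hnorm]; exact hfrob_eq _ _ (frobSq_unitary_left h)
  have hinvR : ∀ M U : Matrix ι ι ℂ, U * Uᴴ = 1 → ‖M * U‖ = ‖M‖ := fun M U h => by
    rw [hnorm, hnorm]; exact hfrob_eq _ _ (frobSq_unitary_right h)
  set X : Matrix ι ι ℂ := (-Complex.I) • A with hXdef
  set Y : Matrix ι ι ℂ := Complex.I • B with hYdef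
  have hXs : ∀ s : ℝ, ((s • X : Matrix ι ι ℂ))ᴴ = -(s • X) := by
    intro s
    rw [real_smul_matrix, hXdef, smul_smul]
    refine skew_smul hA ?_
    simp only [_root_.map_mul, _root_.map_neg, Complex.conj_I, Complex.conj_ofReal]
    ring
  have hYs : ∀ s : ℝ, ((s • Y : Matrix ι ι ℂ))ᴴ = -(s • Y) := by
    intro s
    rw [real_smul_matrix, hYdef, smul_smul]
    refine skew_smul hB ?_
    simp only [_root_.map_mul, Complex.conj_I, Complex.conj_ofReal]
    ring
  have hXs' : ∀ s : ℝ, ((s • (-Y) : Matrix ι ι ℂ))ᴴ = -(s • (-Y)) := by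
    intro s
    rw [smul_neg, Matrix.conjTranspose_neg, hYs, neg_neg]
  have hee : (NormedSpace.exp : Matrix ι ι ℂ → Matrix ι ι ℂ) = NormedSpace.exp :=
    rfl
  have hd : ∀ (Z : Matrix ι ι ℂ) (s : ℝ),
      HasDerivAt (fun u : ℝ => NormedSpace.exp (u • Z)) (NormedSpace.exp (s • Z) * Z) s := by
    intro Z s
    exact _root_.hasDerivAt_exp_smul_const (𝕂 := ℝ) Z s
  have hd' : ∀ (Z : Matrix ι ι ℂ) (s : ℝ),
      HasDerivAt (fun u : ℝ => NormedSpace.exp (u • Z)) (Z * NormedSpace.exp (s • Z)) s := by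
    intro Z s
    exact _root_.hasDerivAt_exp_smul_const' (𝕂 := ℝ) Z s
  set f : ℝ → Matrix ι ι ℂ :=
    fun s => NormedSpace.exp (s • X) * NormedSpace.exp (s • Y) with hfdef
  have hf : ∀ s : ℝ, HasDerivAt f
      (NormedSpace.exp (s • X) * ((X + Y) * NormedSpace.exp (s • Y))) s := by
    intro s
    have := (hd X s).mul (hd' Y s)
    exact this.congr_deriv (by noncomm_ring)
  have hbound : ∀ s : ℝ,
      ‖NormedSpace.exp (s • X) * ((X + Y) * NormedSpace.exp (s • Y))‖ = ‖A - B‖ := by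
    intro s
    rw [hinvL _ _ (exp_skew_left (hXs s)), hinvR _ _ (exp_skew_right (hYs s)),
      show X + Y = (-Complex.I) • (A - B) by rw [hXdef, hYdef]; module]
    rw [norm_smul]
    simp
  have hmvt : ‖f t - f 0‖ ≤ ‖A - B‖ * (t - 0) := by
    refine norm_image_sub_le_of_norm_deriv_le_segment' (a := 0) (b := t)
      (f' := fun s => NormedSpace.exp (s • X) * ((X + Y) * NormedSpace.exp (s • Y)))
      (fun s _ => (hf s).hasDerivWithinAt) (fun s _ => le_of_eq (hbound s)) t ?_
    exact Set.right_mem_Icc.2 ht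
  have hf0 : f 0 = 1 := by
    rw [hfdef]
    simp [NormedSpace.exp_zero]
  have hYneg : NormedSpace.exp (t • Y) * NormedSpace.exp (t • (-Y)) = 1 := by
    rw [smul_neg, ← Matrix.exp_add_of_commute _ _ (Commute.refl (t • Y)).neg_right,
      add_neg_cancel, NormedSpace.exp_zero]
  have hDeq : NormedSpace.exp (t • X) - NormedSpace.exp (t • (-Y))
      = (f t - f 0) * NormedSpace.exp (t • (-Y)) := by
    rw [hf0, sub_mul, one_mul, hfdef]
    rw [mul_assoc, hYneg, mul_one]
  have hargA : (-Complex.I * (t : ℂ)) • A = t • X := by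
    rw [real_smul_matrix, hXdef, smul_smul, mul_comm]
  have hargB : (-Complex.I * (t : ℂ)) • B = t • (-Y) := by
    rw [show -Y = (-Complex.I) • B by rw [hYdef, ← neg_smul], real_smul_matrix, smul_smul,
      mul_comm]
  rw [← hnorm, hargA, hargB, hDeq,
    hinvR _ _ (exp_skew_right (hXs' t)), ← hnorm (A - B)]
  calc ‖f t - f 0‖ ≤ ‖A - B‖ * (t - 0) := hmvt
    _ = t * ‖A - B‖ := by ring

lemma conj_vecMulVec {α : Type*} [Fintype α] (M N : Matrix α α ℂ) (a b : α → ℂ) :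
    M * Matrix.vecMulVec a (star b) * Nᴴ
      = Matrix.vecMulVec (M *ᵥ a) (star (N *ᵥ b)) := by
  ext i j
  simp only [Matrix.mul_apply, Matrix.vecMulVec_apply, Matrix.conjTranspose_apply,
    Pi.star_apply, Matrix.mulVec, dotProduct]
  rw [star_sum, Finset.sum_mul_sum]
  simp_rw [Finset.sum_mul]
  rw [Finset.sum_comm]
  refine Finset.sum_congr rfl fun k _ => Finset.sum_congr rfl fun l _ => ?_
  rw [star_mul']
  ring

lemma kron_mulVec {n : ℕ} (A : Matrix (Fin n → Fin 2) (Fin n → Fin 2) ℂ)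
    (p : (Fin n → Fin 2) × (Fin n → Fin 2)) :
    ((A ⊗ₖ (1 : Matrix (Fin n → Fin 2) (Fin n → Fin 2) ℂ)) *ᵥ maxEntVec n) p
      = A p.1 p.2 * ((Real.sqrt (2 ^ n) : ℝ) : ℂ)⁻¹ := by
  obtain ⟨i, k⟩ := p
  simp [Matrix.mulVec, dotProduct, Fintype.sum_prod_type, maxEntVec,
    Matrix.one_apply, Matrix.kroneckerMap_apply, mul_ite, ite_mul, mul_zero, zero_mul,
    Finset.sum_ite_eq, Finset.sum_ite_eq']

end Stmt16Aux

open Stmt16Aux in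
/-- The difference of normalized Choi states of the evolution channels of `H` and `H'`
satisfies `2^{-1/2} ‖(e^{-iHt}⊗I) Ω (e^{iHt}⊗I) − (e^{-iH't}⊗I) Ω (e^{iH't}⊗I)‖₂
  ≤ (t/√2ⁿ) ‖H − H'‖₂`. -/
theorem stmt16 {n : ℕ} (H H' : Matrix (Fin n → Fin 2) (Fin n → Fin 2) ℂ)
    (hH : H.IsHermitian) (hH' : H'.IsHermitian) (t : ℝ) (ht : 0 ≤ t) :
    (Real.sqrt 2)⁻¹ *
      frob ((NormedSpace.exp ((-Complex.I * (t : ℂ)) • H) ⊗ₖ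
              (1 : Matrix (Fin n → Fin 2) (Fin n → Fin 2) ℂ)) *
            Matrix.vecMulVec (maxEntVec n) (star (maxEntVec n)) *
            (NormedSpace.exp ((-Complex.I * (t : ℂ)) • H) ⊗ₖ
              (1 : Matrix (Fin n → Fin 2) (Fin n → Fin 2) ℂ))ᴴ -
          (NormedSpace.exp ((-Complex.I * (t : ℂ)) • H') ⊗ₖ
              (1 : Matrix (Fin n → Fin 2) (Fin n → Fin 2) ℂ)) *
            Matrix.vecMulVec (maxEntVec n) (star (maxEntVec n)) *
            (NormedSpace.exp ((-Complex.I * (t : ℂ)) • H') ⊗ₖ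
              (1 : Matrix (Fin n → Fin 2) (Fin n → Fin 2) ℂ))ᴴ) ≤
      t / Real.sqrt (2 ^ n) * frob (H - H') := by
  set U : Matrix (Fin n → Fin 2) (Fin n → Fin 2) ℂ :=
    NormedSpace.exp ((-Complex.I * (t : ℂ)) • H) with hUdef
  set V : Matrix (Fin n → Fin 2) (Fin n → Fin 2) ℂ :=
    NormedSpace.exp ((-Complex.I * (t : ℂ)) • H') with hVdef
  have hUu : Uᴴ * U = 1 := exp_herm_unitary hH t
  have hVu : Vᴴ * V = 1 := exp_herm_unitary hH' t
  set u := (U ⊗ₖ (1 : Matrix (Fin n → Fin 2) (Fin n → Fin 2) ℂ)) *ᵥ maxEntVec n with hudef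
  set v := (V ⊗ₖ (1 : Matrix (Fin n → Fin 2) (Fin n → Fin 2) ℂ)) *ᵥ maxEntVec n with hvdef
  have habs_sc : ‖((Real.sqrt (2 ^ n) : ℝ) : ℂ)⁻¹‖ ^ 2 = ((2 : ℝ) ^ n)⁻¹ := by
    rw [norm_inv, Complex.norm_real, Real.norm_eq_abs, _root_.abs_of_nonneg (Real.sqrt_nonneg _), inv_pow,
      Real.sq_sqrt (by positivity)]
  have hcard : (Fintype.card ((Fin n → Fin 2)) : ℝ) = (2 : ℝ) ^ n := by
    simp [Fintype.card_fun]
  have hsum : ∀ W : Matrix (Fin n → Fin 2) (Fin n → Fin 2) ℂ,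
      (∑ p : (Fin n → Fin 2) × (Fin n → Fin 2),
        ‖W p.1 p.2 * ((Real.sqrt (2 ^ n) : ℝ) : ℂ)⁻¹‖ ^ 2)
        = frobSq W * ((2 : ℝ) ^ n)⁻¹ := by
    intro W
    simp_rw [norm_mul, mul_pow, habs_sc, ← Finset.sum_mul]
    congr 1
    rw [frobSq_def]
    exact Fintype.sum_prod_type _
  have hu1 : ∑ p, ‖u p‖ ^ 2 = 1 := by
    calc ∑ p, ‖u p‖ ^ 2
        = ∑ p : (Fin n → Fin 2) × (Fin n → Fin 2),
            ‖U p.1 p.2 * ((Real.sqrt (2 ^ n) : ℝ) : ℂ)⁻¹‖ ^ 2 :=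
          Finset.sum_congr rfl fun p _ => by rw [hudef, kron_mulVec]
      _ = frobSq U * ((2 : ℝ) ^ n)⁻¹ := hsum U
      _ = 1 := by
          rw [frobSq_of_unitary hUu, hcard]
          field_simp
  have hv1 : ∑ p, ‖v p‖ ^ 2 = 1 := by
    calc ∑ p, ‖v p‖ ^ 2
        = ∑ p : (Fin n → Fin 2) × (Fin n → Fin 2),
            ‖V p.1 p.2 * ((Real.sqrt (2 ^ n) : ℝ) : ℂ)⁻¹‖ ^ 2 :=
          Finset.sum_congr rfl fun p _ => by rw [hvdef, kron_mulVec]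
      _ = frobSq V * ((2 : ℝ) ^ n)⁻¹ := hsum V
      _ = 1 := by
          rw [frobSq_of_unitary hVu, hcard]
          field_simp
  have hdiff : ∑ p, ‖u p - v p‖ ^ 2 = frobSq (U - V) * ((2 : ℝ) ^ n)⁻¹ := by
    calc ∑ p, ‖u p - v p‖ ^ 2
        = ∑ p : (Fin n → Fin 2) × (Fin n → Fin 2),
            ‖(U - V) p.1 p.2 * ((Real.sqrt (2 ^ n) : ℝ) : ℂ)⁻¹‖ ^ 2 := by
          refine Finset.sum_congr rfl fun p _ => ?_
          rw [hudef, hvdef, kron_mulVec, kron_mulVec, Matrix.sub_apply, sub_mul]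
      _ = frobSq (U - V) * ((2 : ℝ) ^ n)⁻¹ := hsum (U - V)
  rw [conj_vecMulVec, conj_vecMulVec, ← hudef, ← hvdef]
  calc (Real.sqrt 2)⁻¹ * frob (vecMulVec u (star u) - vecMulVec v (star v))
      ≤ (Real.sqrt 2)⁻¹ * (Real.sqrt 2 * Real.sqrt (∑ p, ‖u p - v p‖ ^ 2)) := by
        refine mul_le_mul_of_nonneg_left (rankOne_diff_le u v hu1 hv1) (by positivity)
    _ = Real.sqrt (∑ p, ‖u p - v p‖ ^ 2) := by
        rw [← mul_assoc, inv_mul_cancel₀ (by positivity : Real.sqrt 2 ≠ 0), one_mul]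
    _ = frob (U - V) * (Real.sqrt ((2 : ℝ) ^ n))⁻¹ := by
        rw [hdiff, Real.sqrt_mul (frobSq_nonneg _), Real.sqrt_inv, frob_def]
    _ ≤ (t * frob (H - H')) * (Real.sqrt ((2 : ℝ) ^ n))⁻¹ := by
        refine mul_le_mul_of_nonneg_right ?_ (by positivity)
        exact exp_diff_frob H H' hH hH' ht
    _ = t / Real.sqrt (2 ^ n) * frob (H - H') := by ring
end

section
/- Let $\theta \in [a,b] \subset \mathbb{R}$ and let $z \in \mathbb{C}$ satisfy $|z - e^{i\theta \pi/(b-a)}| < 1/2$. Define $w = e^{-i(a+b)\pi/(2(b-a))} z$. If $\mathrm{Im}(w) \le 0$ then $\theta \in [a, (a+2b)/3]$, and if $\mathrm{Im}(w) > 0$ then $\theta \in [(2a+b)/3, b]$. -/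
open Real

/-- The decision step of robust frequency estimation: if `θ ∈ [a,b]` and
`|z − e^{iθπ/(b−a)}| < 1/2`, then with `w = e^{−i(a+b)π/(2(b−a))} z`:
`Im w ≤ 0` implies `θ ∈ [a, (a+2b)/3]`, and `Im w > 0` implies `θ ∈ [(2a+b)/3, b]`. -/
theorem stmt17 (a b θ : ℝ) (hab : a < b) (hθ : θ ∈ Set.Icc a b) (z : ℂ)
    (hz : ‖z - Complex.exp (Complex.I * (θ : ℂ) * ((π : ℂ) / ((b : ℂ) - a)))‖ <
      1 / 2) :
    ((Complex.exp (-Complex.I * (((a : ℂ) + b) * (π : ℂ) / (2 * ((b : ℂ) - a)))) * z).im ≤ 0 →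
      θ ∈ Set.Icc a ((a + 2 * b) / 3)) ∧
    (0 < (Complex.exp (-Complex.I * (((a : ℂ) + b) * (π : ℂ) / (2 * ((b : ℂ) - a)))) * z).im →
      θ ∈ Set.Icc ((2 * a + b) / 3) b) := by
  obtain ⟨hθ1, hθ2⟩ := hθ
  have hd : (0:ℝ) < b - a := sub_pos.2 hab
  have hdc : ((b:ℂ) - (a:ℂ)) ≠ 0 := by
    exact_mod_cast (sub_ne_zero.2 (ne_of_gt hab) : (b - a : ℝ) ≠ 0)
  set x : ℝ := π * (θ - (a+b)/2) / (b-a) with hx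
  set c : ℂ := -Complex.I * (((a : ℂ) + b) * (π : ℂ) / (2 * ((b : ℂ) - a))) with hc
  set E : ℂ := Complex.exp (Complex.I * (θ : ℂ) * ((π : ℂ) / ((b : ℂ) - a))) with hE
  have hexp : Complex.exp c * E = Complex.exp ((x:ℂ) * Complex.I) := by
    rw [hE, hc, ← Complex.exp_add]
    congr 1
    rw [hx]
    push_cast
    field_simp
    ring
  have hsplit : Complex.exp c * z
      = Complex.exp c * (z - E) + Complex.exp ((x:ℂ) * Complex.I) := by
    rw [← hexp]; ring
  have habs1 : ‖Complex.exp c‖ = 1 := by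
    have : c = ((-((a+b) * π / (2*(b-a))) : ℝ) : ℂ) * Complex.I := by
      rw [hc]; push_cast; field_simp
    rw [this, Complex.norm_exp_ofReal_mul_I]
  have him : (Complex.exp c * z).im = (Complex.exp c * (z - E)).im + Real.sin x := by
    rw [hsplit, Complex.add_im, Complex.exp_ofReal_mul_I_im]
  have hb : |(Complex.exp c * (z - E)).im| < 1/2 := by
    calc |(Complex.exp c * (z - E)).im| ≤ ‖Complex.exp c * (z - E)‖ :=
          Complex.abs_im_le_norm _
      _ = ‖z - E‖ := by rw [norm_mul, habs1, one_mul]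
      _ < 1/2 := hz
  rw [abs_lt] at hb
  have hx2 : x ≤ π/2 := by
    rw [hx, div_le_iff₀ hd]; nlinarith [pi_pos]
  have hx2' : -(π/2) ≤ x := by
    rw [hx, le_div_iff₀ hd]; nlinarith [pi_pos]
  constructor
  · intro hw
    refine ⟨hθ1, ?_⟩
    by_contra h
    push_neg at h
    have hx6 : π/6 < x := by
      rw [hx, lt_div_iff₀ hd]; nlinarith [pi_pos]
    have : Real.sin (π/6) < Real.sin x :=
      Real.sin_lt_sin_of_lt_of_le_pi_div_two (by linarith [pi_pos]) hx2 hx6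
    rw [Real.sin_pi_div_six] at this
    linarith [him ▸ hw]
  · intro hw
    refine ⟨?_, hθ2⟩
    by_contra h
    push_neg at h
    have hx6 : x < -(π/6) := by
      rw [hx, div_lt_iff₀ hd]; nlinarith [pi_pos]
    have : Real.sin x < Real.sin (-(π/6)) :=
      Real.sin_lt_sin_of_lt_of_le_pi_div_two hx2' (by linarith [pi_pos]) hx6
    rw [Real.sin_neg, Real.sin_pi_div_six] at this
    linarith [him ▸ hw]
end
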